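/- For all admissible functions f₁ and f₂ there exists a permutation σ of ℕ with the following property: for every permutation τ of ℕ such that (f₁·(f₂∘σ))∘τ is monotone nondecreasing, the function (f₁·(f₂∘σ))∘τ is not equivalent to the pointwise product f₁·f₂. (Hence the invariant of a scale Hilbert triple at the pair (0,2) need not be the product of its invariants at (0,1) and (1,2), so not every scale Hilbert space arises from a sequence of weight functions.) -/

import Mathlib

noncomputable section

/-- `f` is admissible: positive, monotone nondecreasing, and unbounded. -/
def Admissible (f : ℕ → ℝ) : Prop :=
  (∀ n, 0 < f n) ∧ Monotone f ∧ ¬ BddAbove (Set.range f)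

/-- Membership in the weighted space `ℓ²_f`: `∑ f n * x n ^ 2 < ∞`. -/
def MemW (f : ℕ → ℝ) (x : ℕ → ℝ) : Prop :=
  Summable fun n => f n * x n ^ 2

/-- The `ℓ²_f` norm of a sequence, `(∑ f n * x n ^ 2)^(1/2)`. -/
noncomputable def wNorm (f : ℕ → ℝ) (x : ℕ → ℝ) : ℝ :=
  Real.sqrt (∑' n, f n * x n ^ 2)

/-- Equivalence of positive weight functions: `(1/c) f₁ ≤ f₂ ≤ c f₁`. -/
def FEquiv (f₁ f₂ : ℕ → ℝ) : Prop :=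
  ∃ c : ℝ, 0 < c ∧ ∀ n, (1 / c) * f₁ n ≤ f₂ n ∧ f₂ n ≤ c * f₁ n

/-- The Hilbert space `ℓ²` of square-summable real sequences. -/
abbrev L2 := lp (fun _ : ℕ => ℝ) 2

namespace RearrAux

open scoped Classical

variable (f₁ f₂ : ℕ → ℝ)

variable (h₁ : Admissible f₁) (h₂ : Admissible f₂)

def hf : ℕ → ℝ := fun n => f₁ n * f₂ n

lemma adm_unbdd {f : ℕ → ℝ} (hf : Admissible f) (T : ℝ) : ∃ n, T < f n := by
  obtain ⟨y, ⟨n, rfl⟩, hy⟩ := not_bddAbove_iff.mp hf.2.2 T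
  exact ⟨n, hy⟩

include h₁ h₂

lemma hf_pos (n : ℕ) : 0 < hf f₁ f₂ n := mul_pos (h₁.1 n) (h₂.1 n)

lemma hf_mono : Monotone (hf f₁ f₂) := fun a b hab =>
  mul_le_mul (h₁.2.1 hab) (h₂.2.1 hab) (h₂.1 a).le (h₁.1 b).le

lemma hf_unbdd (T : ℝ) : ∃ n, T < hf f₁ f₂ n := by
  obtain ⟨n, hn⟩ := adm_unbdd h₁ (T / f₂ 0)
  refine ⟨n, ?_⟩
  have h0 : T < f₁ n * f₂ 0 := (div_lt_iff₀ (h₂.1 0)).mp hn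
  exact h0.trans_le (mul_le_mul_of_nonneg_left (h₂.2.1 (Nat.zero_le n)) (h₁.1 n).le)

/-- `FF k N` : least `m` with `(k+1) * hf N < hf m`. -/
def FF (k N : ℕ) : ℕ := Nat.find (hf_unbdd f₁ f₂ h₁ h₂ ((k + 1 : ℝ) * hf f₁ f₂ N))

lemma FF_spec (k N : ℕ) : (k + 1 : ℝ) * hf f₁ f₂ N < hf f₁ f₂ (FF f₁ f₂ h₁ h₂ k N) :=
  Nat.find_spec (hf_unbdd f₁ f₂ h₁ h₂ _)

lemma lt_FF_of_le {k N m : ℕ} (h : hf f₁ f₂ m ≤ (k + 1 : ℝ) * hf f₁ f₂ N) :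
    m < FF f₁ f₂ h₁ h₂ k N := by
  by_contra hcon
  push_neg at hcon
  exact absurd ((FF_spec f₁ f₂ h₁ h₂ k N).trans_le (hf_mono f₁ f₂ h₁ h₂ hcon)) (not_lt.mpr h)

lemma N_lt_FF (k N : ℕ) : N < FF f₁ f₂ h₁ h₂ k N := by
  apply lt_FF_of_le
  have h0 := (hf_pos f₁ f₂ h₁ h₂ N).le
  nlinarith [h0, (Nat.cast_nonneg k : (0:ℝ) ≤ k)]

/-- Stage data validity. -/
def Good (k P : ℕ) (T : ℝ) (NC : ℕ × ℕ) : Prop :=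
  P < NC.1 ∧ T < hf f₁ f₂ NC.1 ∧ FF f₁ f₂ h₁ h₂ k NC.1 ≤ NC.2 ∧
    (k + 1 : ℝ) * hf f₁ f₂ NC.1 < f₁ 0 * f₂ NC.2 ∧
    (k + 1 : ℝ) * hf f₁ f₂ NC.1 < f₁ NC.2 * f₂ 0

lemma good_ex (k P : ℕ) (T : ℝ) : ∃ NC, Good f₁ f₂ h₁ h₂ k P T NC := by
  obtain ⟨N₀, hN₀⟩ := hf_unbdd f₁ f₂ h₁ h₂ T
  set N := max N₀ (P + 1) with hN
  have hTN : T < hf f₁ f₂ N := hN₀.trans_le (hf_mono f₁ f₂ h₁ h₂ (le_max_left _ _))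
  set t := (k + 1 : ℝ) * hf f₁ f₂ N with ht
  obtain ⟨C₁, hC₁⟩ := adm_unbdd h₂ (t / f₁ 0)
  obtain ⟨C₂, hC₂⟩ := adm_unbdd h₁ (t / f₂ 0)
  set C := max (max C₁ C₂) (FF f₁ f₂ h₁ h₂ k N) with hC
  refine ⟨(N, C), lt_of_lt_of_le (Nat.lt_succ_self P) (le_max_right _ _), hTN,
    le_max_right _ _, ?_, ?_⟩
  · have : t / f₁ 0 < f₂ C :=
      hC₁.trans_le (h₂.2.1 ((le_max_left _ _).trans (le_max_left _ _)))
    calc t < f₂ C * f₁ 0 := (div_lt_iff₀ (h₁.1 0)).mp this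
    _ = f₁ 0 * f₂ C := mul_comm _ _
  · have : t / f₂ 0 < f₁ C :=
      hC₂.trans_le (h₁.2.1 ((le_max_right _ _).trans (le_max_left _ _)))
    exact (div_lt_iff₀ (h₂.1 0)).mp this

/-- The recursive sequence of stages. -/
def stages : ℕ → ℕ × ℕ := fun k =>
  Nat.rec (Classical.choose (good_ex f₁ f₂ h₁ h₂ 0 0 0))
    (fun k p =>
      Classical.choose (good_ex f₁ f₂ h₁ h₂ (k + 1)
        (p.2 + (FF f₁ f₂ h₁ h₂ k p.1 - p.1)) ((k + 1 : ℝ) * hf f₁ f₂ p.1))) k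

def NN (k : ℕ) : ℕ := (stages f₁ f₂ h₁ h₂ k).1
def CC (k : ℕ) : ℕ := (stages f₁ f₂ h₁ h₂ k).2
def FB (k : ℕ) : ℕ := FF f₁ f₂ h₁ h₂ k (NN f₁ f₂ h₁ h₂ k)
def tt (k : ℕ) : ℝ := (k + 1 : ℝ) * hf f₁ f₂ (NN f₁ f₂ h₁ h₂ k)
def EB (k : ℕ) : ℕ := CC f₁ f₂ h₁ h₂ k + (FB f₁ f₂ h₁ h₂ k - NN f₁ f₂ h₁ h₂ k)

lemma stages_zero : Good f₁ f₂ h₁ h₂ 0 0 0 (stages f₁ f₂ h₁ h₂ 0) :=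
  Classical.choose_spec (good_ex f₁ f₂ h₁ h₂ 0 0 0)

lemma stages_succ (k : ℕ) :
    Good f₁ f₂ h₁ h₂ (k + 1) (EB f₁ f₂ h₁ h₂ k) (tt f₁ f₂ h₁ h₂ k)
      (stages f₁ f₂ h₁ h₂ (k + 1)) :=
  Classical.choose_spec (good_ex f₁ f₂ h₁ h₂ (k + 1) _ _)

lemma FB_le_CC (k : ℕ) : FB f₁ f₂ h₁ h₂ k ≤ CC f₁ f₂ h₁ h₂ k := by
  cases k with
  | zero => exact (stages_zero f₁ f₂ h₁ h₂).2.2.1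
  | succ k => exact (stages_succ f₁ f₂ h₁ h₂ k).2.2.1

lemma ttC1 (k : ℕ) : tt f₁ f₂ h₁ h₂ k < f₁ 0 * f₂ (CC f₁ f₂ h₁ h₂ k) := by
  cases k with
  | zero => exact (stages_zero f₁ f₂ h₁ h₂).2.2.2.1
  | succ k => exact (stages_succ f₁ f₂ h₁ h₂ k).2.2.2.1

lemma ttC2 (k : ℕ) : tt f₁ f₂ h₁ h₂ k < f₁ (CC f₁ f₂ h₁ h₂ k) * f₂ 0 := by
  cases k with
  | zero => exact (stages_zero f₁ f₂ h₁ h₂).2.2.2.2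
  | succ k => exact (stages_succ f₁ f₂ h₁ h₂ k).2.2.2.2

lemma NN_lt_FB (k : ℕ) : NN f₁ f₂ h₁ h₂ k < FB f₁ f₂ h₁ h₂ k :=
  N_lt_FF f₁ f₂ h₁ h₂ k _

lemma CC_le_EB (k : ℕ) : CC f₁ f₂ h₁ h₂ k ≤ EB f₁ f₂ h₁ h₂ k := Nat.le_add_right _ _

lemma EB_lt_NN_succ (k : ℕ) : EB f₁ f₂ h₁ h₂ k < NN f₁ f₂ h₁ h₂ (k + 1) :=
  (stages_succ f₁ f₂ h₁ h₂ k).1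

lemma tt_lt_hfN_succ (k : ℕ) : tt f₁ f₂ h₁ h₂ k < hf f₁ f₂ (NN f₁ f₂ h₁ h₂ (k + 1)) :=
  (stages_succ f₁ f₂ h₁ h₂ k).2.1

lemma NN_strictMono : StrictMono (NN f₁ f₂ h₁ h₂) := by
  apply strictMono_nat_of_lt_succ
  intro k
  calc NN f₁ f₂ h₁ h₂ k < FB f₁ f₂ h₁ h₂ k := NN_lt_FB f₁ f₂ h₁ h₂ k
  _ ≤ CC f₁ f₂ h₁ h₂ k := FB_le_CC f₁ f₂ h₁ h₂ k
  _ ≤ EB f₁ f₂ h₁ h₂ k := CC_le_EB f₁ f₂ h₁ h₂ k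
  _ < NN f₁ f₂ h₁ h₂ (k + 1) := EB_lt_NN_succ f₁ f₂ h₁ h₂ k

lemma tt_mono : Monotone (tt f₁ f₂ h₁ h₂) := by
  apply monotone_nat_of_le_succ
  intro k
  have h3 : hf f₁ f₂ (NN f₁ f₂ h₁ h₂ (k + 1)) ≤ tt f₁ f₂ h₁ h₂ (k + 1) := by
    have := (hf_pos f₁ f₂ h₁ h₂ (NN f₁ f₂ h₁ h₂ (k + 1))).le
    unfold tt
    nlinarith [(Nat.cast_nonneg (k + 1) : (0:ℝ) ≤ (k + 1 : ℕ))]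
  exact (tt_lt_hfN_succ f₁ f₂ h₁ h₂ k).le.trans h3

lemma tt_lt_hfNN {k j : ℕ} (hkj : k < j) :
    tt f₁ f₂ h₁ h₂ k < hf f₁ f₂ (NN f₁ f₂ h₁ h₂ j) := by
  obtain ⟨m, rfl⟩ := Nat.exists_eq_add_of_lt hkj
  calc tt f₁ f₂ h₁ h₂ k ≤ tt f₁ f₂ h₁ h₂ (k + m) := tt_mono f₁ f₂ h₁ h₂ (Nat.le_add_right _ _)
  _ < hf f₁ f₂ (NN f₁ f₂ h₁ h₂ (k + m + 1)) := tt_lt_hfN_succ f₁ f₂ h₁ h₂ (k + m)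

lemma EB_lt_NN {j k : ℕ} (hjk : j < k) : EB f₁ f₂ h₁ h₂ j < NN f₁ f₂ h₁ h₂ k :=
  (EB_lt_NN_succ f₁ f₂ h₁ h₂ j).trans_le ((NN_strictMono f₁ f₂ h₁ h₂).monotone hjk)

lemma FB_le_EB (k : ℕ) : FB f₁ f₂ h₁ h₂ k ≤ EB f₁ f₂ h₁ h₂ k := by
  have h1 := NN_lt_FB f₁ f₂ h₁ h₂ k
  have h2 := FB_le_CC f₁ f₂ h₁ h₂ k
  unfold EB
  omega

/-- Uniqueness: the stage intervals `[NN k, EB k)` are pairwise disjoint. -/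
lemma stage_unique {j k n : ℕ} (hj1 : NN f₁ f₂ h₁ h₂ j ≤ n) (hj2 : n < EB f₁ f₂ h₁ h₂ j)
    (hk1 : NN f₁ f₂ h₁ h₂ k ≤ n) (hk2 : n < EB f₁ f₂ h₁ h₂ k) : j = k := by
  rcases lt_trichotomy j k with h | h | h
  · exact absurd ((hj2.trans_le (EB_lt_NN f₁ f₂ h₁ h₂ h).le).trans_le hk1) (lt_irrefl n)
  · exact h
  · exact absurd ((hk2.trans_le (EB_lt_NN f₁ f₂ h₁ h₂ h).le).trans_le hj1) (lt_irrefl n)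

lemma inA_unique {j k n : ℕ} (hj : NN f₁ f₂ h₁ h₂ j ≤ n ∧ n < FB f₁ f₂ h₁ h₂ j)
    (hk : NN f₁ f₂ h₁ h₂ k ≤ n ∧ n < FB f₁ f₂ h₁ h₂ k) : j = k :=
  stage_unique f₁ f₂ h₁ h₂ hj.1 (hj.2.trans_le (FB_le_EB f₁ f₂ h₁ h₂ j))
    hk.1 (hk.2.trans_le (FB_le_EB f₁ f₂ h₁ h₂ k))

lemma inB_unique {j k n : ℕ} (hj : CC f₁ f₂ h₁ h₂ j ≤ n ∧ n < EB f₁ f₂ h₁ h₂ j)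
    (hk : CC f₁ f₂ h₁ h₂ k ≤ n ∧ n < EB f₁ f₂ h₁ h₂ k) : j = k :=
  stage_unique f₁ f₂ h₁ h₂
    (((NN_lt_FB f₁ f₂ h₁ h₂ j).le.trans (FB_le_CC f₁ f₂ h₁ h₂ j)).trans hj.1) hj.2
    (((NN_lt_FB f₁ f₂ h₁ h₂ k).le.trans (FB_le_CC f₁ f₂ h₁ h₂ k)).trans hk.1) hk.2

lemma not_inA_of_inB {j n : ℕ} (hj : CC f₁ f₂ h₁ h₂ j ≤ n ∧ n < EB f₁ f₂ h₁ h₂ j) :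
    ¬ ∃ k, NN f₁ f₂ h₁ h₂ k ≤ n ∧ n < FB f₁ f₂ h₁ h₂ k := by
  rintro ⟨k, hk1, hk2⟩
  have hjk : j = k := stage_unique f₁ f₂ h₁ h₂
    (((NN_lt_FB f₁ f₂ h₁ h₂ j).le.trans (FB_le_CC f₁ f₂ h₁ h₂ j)).trans hj.1) hj.2
    hk1 (hk2.trans_le (FB_le_EB f₁ f₂ h₁ h₂ k))
  subst hjk
  exact absurd ((hk2.trans_le (FB_le_CC f₁ f₂ h₁ h₂ j)).trans_le hj.1) (lt_irrefl n)

/-- The involution underlying the permutation. -/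
def sigma0 (n : ℕ) : ℕ :=
  if hA : ∃ k, NN f₁ f₂ h₁ h₂ k ≤ n ∧ n < FB f₁ f₂ h₁ h₂ k then
    CC f₁ f₂ h₁ h₂ hA.choose + (n - NN f₁ f₂ h₁ h₂ hA.choose)
  else if hB : ∃ k, CC f₁ f₂ h₁ h₂ k ≤ n ∧ n < EB f₁ f₂ h₁ h₂ k then
    NN f₁ f₂ h₁ h₂ hB.choose + (n - CC f₁ f₂ h₁ h₂ hB.choose)
  else n

lemma sigma0_eqA {k n : ℕ} (hk : NN f₁ f₂ h₁ h₂ k ≤ n ∧ n < FB f₁ f₂ h₁ h₂ k) :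
    sigma0 f₁ f₂ h₁ h₂ n = CC f₁ f₂ h₁ h₂ k + (n - NN f₁ f₂ h₁ h₂ k) := by
  have hA : ∃ k, NN f₁ f₂ h₁ h₂ k ≤ n ∧ n < FB f₁ f₂ h₁ h₂ k := ⟨k, hk⟩
  rw [sigma0, dif_pos hA]
  have : hA.choose = k := inA_unique f₁ f₂ h₁ h₂ hA.choose_spec hk
  rw [this]

lemma sigma0_eqB {k n : ℕ} (hk : CC f₁ f₂ h₁ h₂ k ≤ n ∧ n < EB f₁ f₂ h₁ h₂ k) :
    sigma0 f₁ f₂ h₁ h₂ n = NN f₁ f₂ h₁ h₂ k + (n - CC f₁ f₂ h₁ h₂ k) := by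
  have hB : ∃ k, CC f₁ f₂ h₁ h₂ k ≤ n ∧ n < EB f₁ f₂ h₁ h₂ k := ⟨k, hk⟩
  rw [sigma0, dif_neg (not_inA_of_inB f₁ f₂ h₁ h₂ hk), dif_pos hB]
  have : hB.choose = k := inB_unique f₁ f₂ h₁ h₂ hB.choose_spec hk
  rw [this]

lemma sigma0_eq_self {n : ℕ} (hA : ¬ ∃ k, NN f₁ f₂ h₁ h₂ k ≤ n ∧ n < FB f₁ f₂ h₁ h₂ k)
    (hB : ¬ ∃ k, CC f₁ f₂ h₁ h₂ k ≤ n ∧ n < EB f₁ f₂ h₁ h₂ k) :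
    sigma0 f₁ f₂ h₁ h₂ n = n := by
  rw [sigma0, dif_neg hA, dif_neg hB]

lemma sigma0_invol : Function.Involutive (sigma0 f₁ f₂ h₁ h₂) := by
  intro n
  by_cases hA : ∃ k, NN f₁ f₂ h₁ h₂ k ≤ n ∧ n < FB f₁ f₂ h₁ h₂ k
  · obtain ⟨k, hk⟩ := hA
    rw [sigma0_eqA f₁ f₂ h₁ h₂ hk]
    have h1 := NN_lt_FB f₁ f₂ h₁ h₂ k
    have hb : CC f₁ f₂ h₁ h₂ k ≤ CC f₁ f₂ h₁ h₂ k + (n - NN f₁ f₂ h₁ h₂ k) ∧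
        CC f₁ f₂ h₁ h₂ k + (n - NN f₁ f₂ h₁ h₂ k) < EB f₁ f₂ h₁ h₂ k := by
      unfold EB; omega
    rw [sigma0_eqB f₁ f₂ h₁ h₂ hb]
    omega
  · by_cases hB : ∃ k, CC f₁ f₂ h₁ h₂ k ≤ n ∧ n < EB f₁ f₂ h₁ h₂ k
    · obtain ⟨k, hk⟩ := hB
      rw [sigma0_eqB f₁ f₂ h₁ h₂ hk]
      have h1 := NN_lt_FB f₁ f₂ h₁ h₂ k
      have h2 := FB_le_CC f₁ f₂ h₁ h₂ k
      have hk' := hk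
      unfold EB at hk'
      have ha : NN f₁ f₂ h₁ h₂ k ≤ NN f₁ f₂ h₁ h₂ k + (n - CC f₁ f₂ h₁ h₂ k) ∧
          NN f₁ f₂ h₁ h₂ k + (n - CC f₁ f₂ h₁ h₂ k) < FB f₁ f₂ h₁ h₂ k := by omega
      rw [sigma0_eqA f₁ f₂ h₁ h₂ ha]
      omega
    · rw [sigma0_eq_self f₁ f₂ h₁ h₂ hA hB, sigma0_eq_self f₁ f₂ h₁ h₂ hA hB]

/-- Key lemma: any index where `f₁ · (f₂ ∘ σ)` is at most `tt k` lies below `NN k`. -/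
lemma key (k n : ℕ) (hg : f₁ n * f₂ (sigma0 f₁ f₂ h₁ h₂ n) ≤ tt f₁ f₂ h₁ h₂ k) :
    n < NN f₁ f₂ h₁ h₂ k := by
  by_cases hA : ∃ j, NN f₁ f₂ h₁ h₂ j ≤ n ∧ n < FB f₁ f₂ h₁ h₂ j
  · obtain ⟨j, hj⟩ := hA
    rw [sigma0_eqA f₁ f₂ h₁ h₂ hj] at hg
    set b := CC f₁ f₂ h₁ h₂ j + (n - NN f₁ f₂ h₁ h₂ j) with hbdef
    rcases lt_trichotomy j k with hjk | rfl | hjk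
    · have h1 := FB_le_EB f₁ f₂ h₁ h₂ j
      have h2 := EB_lt_NN f₁ f₂ h₁ h₂ hjk
      omega
    · exfalso
      have hcb : CC f₁ f₂ h₁ h₂ j ≤ b := Nat.le_add_right _ _
      have hmul : f₁ 0 * f₂ (CC f₁ f₂ h₁ h₂ j) ≤ f₁ n * f₂ b :=
        mul_le_mul (h₁.2.1 (Nat.zero_le n)) (h₂.2.1 hcb) (h₂.1 _).le (h₁.1 n).le
      have := ttC1 f₁ f₂ h₁ h₂ j
      linarith
    · exfalso
      have hnb : n ≤ b := by
        have h1 := hj.2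
        have h2 := FB_le_CC f₁ f₂ h₁ h₂ j
        omega
      have hmul : hf f₁ f₂ n ≤ f₁ n * f₂ b :=
        mul_le_mul_of_nonneg_left (h₂.2.1 hnb) (h₁.1 n).le
      have h3 : hf f₁ f₂ (NN f₁ f₂ h₁ h₂ j) ≤ hf f₁ f₂ n := hf_mono f₁ f₂ h₁ h₂ hj.1
      have h4 := tt_lt_hfNN f₁ f₂ h₁ h₂ hjk
      linarith
  · by_cases hB : ∃ j, CC f₁ f₂ h₁ h₂ j ≤ n ∧ n < EB f₁ f₂ h₁ h₂ j
    · obtain ⟨j, hj⟩ := hB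
      rw [sigma0_eqB f₁ f₂ h₁ h₂ hj] at hg
      set a := NN f₁ f₂ h₁ h₂ j + (n - CC f₁ f₂ h₁ h₂ j) with hadef
      rcases lt_trichotomy j k with hjk | rfl | hjk
      · have h2 := EB_lt_NN f₁ f₂ h₁ h₂ hjk
        omega
      · exfalso
        have hmul : f₁ (CC f₁ f₂ h₁ h₂ j) * f₂ 0 ≤ f₁ n * f₂ a :=
          mul_le_mul (h₁.2.1 hj.1) (h₂.2.1 (Nat.zero_le a)) (h₂.1 _).le (h₁.1 n).le
        have := ttC2 f₁ f₂ h₁ h₂ j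
        linarith
      · exfalso
        have h1 := NN_lt_FB f₁ f₂ h₁ h₂ j
        have h2 := FB_le_CC f₁ f₂ h₁ h₂ j
        have han : a ≤ n := by omega
        have hmul : hf f₁ f₂ a ≤ f₁ n * f₂ a :=
          mul_le_mul_of_nonneg_right (h₁.2.1 han) (h₂.1 a).le
        have h3 : hf f₁ f₂ (NN f₁ f₂ h₁ h₂ j) ≤ hf f₁ f₂ a :=
          hf_mono f₁ f₂ h₁ h₂ (Nat.le_add_right _ _)
        have h4 := tt_lt_hfNN f₁ f₂ h₁ h₂ hjk
        linarith
    · rw [sigma0_eq_self f₁ f₂ h₁ h₂ hA hB] at hg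
      have h1 : n < FB f₁ f₂ h₁ h₂ k := lt_FF_of_le f₁ f₂ h₁ h₂ hg
      push_neg at hA
      have h2 := hA k
      omega

theorem main :
    ∃ σ : Equiv.Perm ℕ, ∀ τ : Equiv.Perm ℕ,
      Monotone (fun n => f₁ (τ n) * f₂ (σ (τ n))) →
      ¬ FEquiv (fun n => f₁ (τ n) * f₂ (σ (τ n))) (fun n => f₁ n * f₂ n) := by
  refine ⟨(sigma0_invol f₁ f₂ h₁ h₂).toPerm, fun τ _ hFE => ?_⟩
  obtain ⟨c, hc, hce⟩ := hFE
  set k := ⌈c⌉₊ with hk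
  have hck : c ≤ (k : ℝ) + 1 := (Nat.le_ceil c).trans (by rw [← hk]; norm_num)
  have hτ : ∀ n ∈ Finset.Iic (NN f₁ f₂ h₁ h₂ k),
      τ n ∈ Finset.Iio (NN f₁ f₂ h₁ h₂ k) := by
    intro n hn
    rw [Finset.mem_Iic] at hn
    rw [Finset.mem_Iio]
    apply key f₁ f₂ h₁ h₂ k
    have h1 := (hce n).1
    have h2 : f₁ (τ n) * f₂ (sigma0 f₁ f₂ h₁ h₂ (τ n)) ≤ c * (f₁ n * f₂ n) := by
      rw [one_div] at h1
      exact (inv_mul_le_iff₀ hc).mp h1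
    have h3 : (f₁ n * f₂ n) ≤ hf f₁ f₂ (NN f₁ f₂ h₁ h₂ k) := hf_mono f₁ f₂ h₁ h₂ hn
    have h4 := (hf_pos f₁ f₂ h₁ h₂ (NN f₁ f₂ h₁ h₂ k)).le
    have h5 : 0 < f₁ n * f₂ n := hf_pos f₁ f₂ h₁ h₂ n
    calc f₁ (τ n) * f₂ (sigma0 f₁ f₂ h₁ h₂ (τ n)) ≤ c * (f₁ n * f₂ n) := h2
    _ ≤ c * hf f₁ f₂ (NN f₁ f₂ h₁ h₂ k) := mul_le_mul_of_nonneg_left h3 hc.le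
    _ ≤ ((k : ℝ) + 1) * hf f₁ f₂ (NN f₁ f₂ h₁ h₂ k) := mul_le_mul_of_nonneg_right hck h4
    _ = tt f₁ f₂ h₁ h₂ k := rfl
  have hcard := Finset.card_le_card_of_injOn (fun n : ℕ => τ n) hτ τ.injective.injOn
  rw [Nat.card_Iic, Nat.card_Iio] at hcard
  omega

end RearrAux

/-- For admissible `f₁, f₂` there is a permutation `σ` of `ℕ` such that the
monotone rearrangement of `f₁·(f₂∘σ)` is not equivalent to the pointwise
product `f₁·f₂`. -/
theorem exists_perm_rearrangement_not_product (f₁ f₂ : ℕ → ℝ)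
    (h₁ : Admissible f₁) (h₂ : Admissible f₂) :
    ∃ σ : Equiv.Perm ℕ, ∀ τ : Equiv.Perm ℕ,
      Monotone (fun n => f₁ (τ n) * f₂ (σ (τ n))) →
      ¬ FEquiv (fun n => f₁ (τ n) * f₂ (σ (τ n))) (fun n => f₁ n * f₂ n) :=
  RearrAux.main f₁ f₂ h₁ h₂
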